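/- Let κ ≥ 2 and let G be κ-partite with vertex classes V_1, …, V_κ (each class an independent set). Over the alphabet Σ = V ∪ {x, y, z} (three new separator letters) define the targets T_{1,i} = x w_i x for 1 ≤ i ≤ κ, where w_i is the concatenation of the vertices of V_i in increasing index order; T_2 = y e_1 y e_2 y ⋯ e_m y; and T_3 = z e_1 z e_2 z ⋯ e_m z. Take pairwise distinct blocks X_i (1 ≤ i ≤ κ), E_{i,j}, A_{i,j}, B_{i,j} (1 ≤ i < j ≤ κ), and fresh joker blocks (each occurring exactly once in the whole system, one per occurrence of * below). The system consists of the equations: T_{1,i} ≡ * X_i * for each 1 ≤ i ≤ κ; and, for each pair 1 ≤ i < j ≤ κ: T_2 ≡ * E_{i,j} *, T_3 ≡ A_{i,j} E_{i,j} B_{i,j}, T_3 ≡ A_{i,j} X_i *, and T_3 ≡ * X_j B_{i,j}. Then the system is satisfied by some assignment if and only if G contains a clique of size κ (equivalently, a multicolored clique with exactly one vertex in each class V_i). (Correctness of the reduction in Theorem 5.2.) -/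

import Mathlib

namespace Stmt8

/-- The alphabet `Σ = V ∪ {x, y, z}`. -/
abbrev Letter (n : ℕ) := Fin n ⊕ Fin 3

def vtx {n : ℕ} (i : Fin n) : Letter n := Sum.inl i
def xSep {n : ℕ} : Letter n := Sum.inr 0
def ySep {n : ℕ} : Letter n := Sum.inr 1
def zSep {n : ℕ} : Letter n := Sum.inr 2

/-- The blocks: the vertex-selection blocks `Xᵢ`, the edge-selection blocks `E_{i,j}`
and the gap blocks `A_{i,j}`, `B_{i,j}` (used for `i < j`), together with fresh joker
blocks (one per occurrence of `*` in the system, each occurring exactly once). -/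
inductive Blk (κ : ℕ) where
  | X (i : Fin κ)
  | E (i j : Fin κ)
  | A (i j : Fin κ)
  | B (i j : Fin κ)
  | J1 (side : Bool) (i : Fin κ)
  | J2 (side : Bool) (i j : Fin κ)
  | J4 (i j : Fin κ)
  | J5 (i j : Fin κ)

/-- `T_{1,i} = x wᵢ x`, where `wᵢ` is the concatenation (in increasing index order) of
the vertices of color class `Vᵢ`. -/
def T1 (n κ : ℕ) (color : Fin n → Fin κ) (i : Fin κ) : List (Letter n) :=
  [xSep] ++ (((List.finRange n).filter fun u => decide (color u = i)).map vtx) ++ [xSep]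

/-- `T₂ = y e₁ y e₂ y ⋯ e_m y`. -/
def T2 (n m : ℕ) (edges : Fin m → Fin n × Fin n) : List (Letter n) :=
  [ySep] ++ (List.finRange m).flatMap fun j =>
    [vtx (edges j).1, vtx (edges j).2, ySep]

/-- `T₃ = z e₁ z e₂ z ⋯ e_m z`. -/
def T3 (n m : ℕ) (edges : Fin m → Fin n × Fin n) : List (Letter n) :=
  [zSep] ++ (List.finRange m).flatMap fun j =>
    [vtx (edges j).1, vtx (edges j).2, zSep]

/-! ### Auxiliary lemmas -/

/-- In a chain `s e₁ s e₂ s ⋯`, two consecutive vertex letters must be one of the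
pairs, and are followed by the separator. -/
lemma pair_of_chain {n : ℕ} (L : List (Fin n × Fin n)) :
    ∀ (l r : List (Letter n)) (a b : Fin n),
      l ++ vtx a :: vtx b :: r =
        zSep :: L.flatMap (fun p => [vtx p.1, vtx p.2, zSep]) →
      (a, b) ∈ L ∧ r.head? = some zSep := by
  induction L with
  | nil =>
    intro l r a b h
    have := congrArg List.length h
    simp at this
    omega
  | cons p L ih =>
    intro l r a b h
    match l with
    | [] =>
      simp [vtx, zSep] at h
    | [x0] =>
      simp only [List.cons_append, List.nil_append, List.flatMap_cons, List.cons.injEq,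
        List.append_assoc] at h
      obtain ⟨h0, h1, h2, h3⟩ := h
      simp only [vtx] at h1 h2
      refine ⟨?_, ?_⟩
      · simp only [Sum.inl.injEq] at h1 h2
        subst h1; subst h2
        exact List.mem_cons_self
      · rw [h3]; rfl
    | [x0, x1] =>
      simp [vtx, zSep] at h
    | x0 :: x1 :: x2 :: l' =>
      simp only [List.cons_append, List.flatMap_cons, List.cons.injEq, List.append_assoc,
        List.nil_append] at h
      obtain ⟨h0, h1, h2, h3⟩ := h
      obtain ⟨hm, hh⟩ := ih l' r a b h3
      exact ⟨List.mem_cons_of_mem _ hm, hh⟩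

/-- Every letter of a chain is either the separator or a vertex letter. -/
lemma mem_chain {n : ℕ} {L : List (Fin n × Fin n)} {c : Letter n} (s : Letter n)
    (h : c ∈ s :: L.flatMap (fun p => [vtx p.1, vtx p.2, s])) :
    c = s ∨ ∃ v : Fin n, c = vtx v := by
  simp only [List.mem_cons, List.mem_flatMap] at h
  rcases h with h | ⟨p, _, h⟩
  · exact Or.inl h
  · simp only [List.mem_cons, List.mem_singleton, List.not_mem_nil, or_false] at h
    rcases h with h | h | h
    · exact Or.inr ⟨p.1, h⟩
    · exact Or.inr ⟨p.2, h⟩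
    · exact Or.inl h

lemma chain_eq_map {n m : ℕ} (edges : Fin m → Fin n × Fin n) (s : Letter n) :
    s :: (List.finRange m).flatMap (fun j => [vtx (edges j).1, vtx (edges j).2, s]) =
    s :: ((List.finRange m).map edges).flatMap (fun p => [vtx p.1, vtx p.2, s]) := by
  simp [List.flatMap_map]

def pre {n m : ℕ} (edges : Fin m → Fin n × Fin n) (s : Letter n) (t : Fin m) :
    List (Letter n) :=
  s :: ((List.finRange m).take t).flatMap (fun j => [vtx (edges j).1, vtx (edges j).2, s])

def post {n m : ℕ} (edges : Fin m → Fin n × Fin n) (s : Letter n) (t : Fin m) :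
    List (Letter n) :=
  s :: ((List.finRange m).drop (t+1)).flatMap (fun j => [vtx (edges j).1, vtx (edges j).2, s])

lemma chain_split {n m : ℕ} (edges : Fin m → Fin n × Fin n) (s : Letter n) (t : Fin m) :
    s :: (List.finRange m).flatMap (fun j => [vtx (edges j).1, vtx (edges j).2, s]) =
    pre edges s t ++ vtx (edges t).1 :: vtx (edges t).2 :: post edges s t := by
  have ht : (t : ℕ) < (List.finRange m).length := by simp [t.isLt]
  conv_lhs => rw [← List.take_append_drop t (List.finRange m), List.drop_eq_getElem_cons ht]
  simp [pre, post]

lemma T3_split {n m : ℕ} (edges : Fin m → Fin n × Fin n) (t : Fin m) :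
    T3 n m edges = pre edges zSep t ++ vtx (edges t).1 :: vtx (edges t).2 :: post edges zSep t := by
  rw [← chain_split]; rfl

lemma T2_split {n m : ℕ} (edges : Fin m → Fin n × Fin n) (t : Fin m) :
    T2 n m edges = pre edges ySep t ++ vtx (edges t).1 :: vtx (edges t).2 :: post edges ySep t := by
  rw [← chain_split]; rfl

lemma T3_eq_chain {n m : ℕ} (edges : Fin m → Fin n × Fin n) :
    T3 n m edges = zSep :: ((List.finRange m).map edges).flatMap
      (fun p => [vtx p.1, vtx p.2, zSep]) := by
  rw [← chain_eq_map]; rfl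

lemma T2_eq_chain {n m : ℕ} (edges : Fin m → Fin n × Fin n) :
    T2 n m edges = ySep :: ((List.finRange m).map edges).flatMap
      (fun p => [vtx p.1, vtx p.2, ySep]) := by
  rw [← chain_eq_map]; rfl

/-- The assignment used in the "if" direction. -/
def mkσ {n m κ : ℕ} (edges : Fin m → Fin n × Fin n) (u : Fin κ → Fin n)
    (t : Fin κ → Fin κ → Fin m) (p s : Fin κ → List (Fin n)) : Blk κ → List (Letter n)
  | .X k => [vtx (u k)]
  | .E i j => [vtx (u i), vtx (u j)]
  | .A i j => pre edges zSep (t i j)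
  | .B i j => post edges zSep (t i j)
  | .J4 i j => vtx (u j) :: post edges zSep (t i j)
  | .J5 i j => pre edges zSep (t i j) ++ [vtx (u i)]
  | .J2 false i j => pre edges ySep (t i j)
  | .J2 true i j => post edges ySep (t i j)
  | .J1 false k => xSep :: (p k).map vtx
  | .J1 true k => (s k).map vtx ++ [xSep]

theorem stmt_8 (n m κ : ℕ) (hκ : 2 ≤ κ)
    (color : Fin n → Fin κ)
    (edges : Fin m → Fin n × Fin n)
    (horder : ∀ j, (edges j).1 < (edges j).2)
    (hcolor : ∀ j, color (edges j).1 < color (edges j).2)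
    (hmono : ∀ u u' : Fin n, u ≤ u' → color u ≤ color u')
    (hsorted : ∀ j j' : Fin m, j < j' →
      (edges j).1 < (edges j').1 ∨
        ((edges j).1 = (edges j').1 ∧ (edges j).2 < (edges j').2)) :
    (∃ σ : Blk κ → List (Letter n),
        (∀ b, σ b ≠ []) ∧
        (∀ i : Fin κ,
          [Blk.J1 false i, Blk.X i, Blk.J1 true i].flatMap σ = T1 n κ color i) ∧
        (∀ i j : Fin κ, i < j →
          [Blk.J2 false i j, Blk.E i j, Blk.J2 true i j].flatMap σ = T2 n m edges) ∧
        (∀ i j : Fin κ, i < j →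
          [Blk.A i j, Blk.E i j, Blk.B i j].flatMap σ = T3 n m edges) ∧
        (∀ i j : Fin κ, i < j →
          [Blk.A i j, Blk.X i, Blk.J4 i j].flatMap σ = T3 n m edges) ∧
        (∀ i j : Fin κ, i < j →
          [Blk.J5 i j, Blk.X j, Blk.B i j].flatMap σ = T3 n m edges)) ↔
    (∃ S : Finset (Fin n), S.card = κ ∧
        ∀ u ∈ S, ∀ w ∈ S, u ≠ w →
          ∃ j : Fin m, edges j = (u, w) ∨ edges j = (w, u)) := by
  constructor
  · -- Forward direction: solution ⇒ clique
    rintro ⟨σ, hne, h1, h2, h3, h4, h5⟩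
    simp only [List.flatMap_cons, List.flatMap_nil, List.append_nil] at h1 h2 h3 h4 h5
    -- every letter of σ (X k) is a vertex of color k
    have hX : ∀ k : Fin κ, ∀ l ∈ σ (Blk.X k), ∃ v : Fin n, l = vtx v ∧ color v = k := by
      intro k l hl
      have h := h1 k
      obtain ⟨a0, a', ha⟩ := List.exists_cons_of_ne_nil (hne (Blk.J1 false k))
      rcases List.eq_nil_or_concat (σ (Blk.J1 true k)) with hc | ⟨c', cl, hc⟩
      · exact absurd hc (hne _)
      rw [ha, hc] at h
      simp only [List.concat_eq_append, T1, List.cons_append, List.nil_append,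
        List.singleton_append, List.cons.injEq] at h
      obtain ⟨ha0, h⟩ := h
      have h' : ((a' ++ σ (Blk.X k)) ++ c') ++ [cl] =
          (List.map vtx (List.filter (fun u => decide (color u = k)) (List.finRange n)))
            ++ [xSep] := by
        simpa [List.append_assoc] using h
      have hmid := (List.append_inj' h' rfl).1
      have hlm : l ∈ List.map vtx
          (List.filter (fun u => decide (color u = k)) (List.finRange n)) := by
        rw [← hmid]; simp [hl]
      simp only [List.mem_map, List.mem_filter, List.mem_finRange, true_and,
        decide_eq_true_eq] at hlm
      obtain ⟨v, hv1, hv2⟩ := hlm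
      exact ⟨v, hv2.symm, hv1⟩
    -- every letter of σ (E i j) is a vertex
    have hEv : ∀ i j : Fin κ, i < j → ∀ l ∈ σ (Blk.E i j), ∃ v : Fin n, l = vtx v := by
      intro i j hij l hl
      have hl2 : l ∈ T2 n m edges := by rw [← h2 i j hij]; simp [hl]
      have hl3 : l ∈ T3 n m edges := by rw [← h3 i j hij]; simp [hl]
      rw [T2_eq_chain] at hl2
      rw [T3_eq_chain] at hl3
      rcases mem_chain _ hl2 with h | h
      · rcases mem_chain _ hl3 with h' | h'
        · rw [h] at h'
          simp [ySep, zSep] at h'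
        · exact h'
      · exact h
    -- each σ (X k) is a single vertex of color k
    have hX1 : ∀ k : Fin κ, ∃ v : Fin n, σ (Blk.X k) = [vtx v] ∧ color v = k := by
      intro k
      have hocc : ∃ l r, l ++ (σ (Blk.X k) ++ r) = T3 n m edges := by
        by_cases hk : (k : ℕ) + 1 < κ
        · exact ⟨_, _, h4 k ⟨(k : ℕ)+1, hk⟩ (by simp [Fin.lt_def])⟩
        · refine ⟨_, _, h5 ⟨0, by omega⟩ k ?_⟩
          have := k.isLt
          simp only [Fin.lt_def]
          omega
      obtain ⟨l, r, hocc⟩ := hocc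
      obtain ⟨x0, xs, hx0⟩ := List.exists_cons_of_ne_nil (hne (Blk.X k))
      obtain ⟨v0, hv0, hv0c⟩ := hX k x0 (by rw [hx0]; simp)
      cases xs with
      | nil => exact ⟨v0, by rw [hx0, hv0], hv0c⟩
      | cons x1 xs' =>
        obtain ⟨v1, hv1, hv1c⟩ := hX k x1 (by rw [hx0]; simp)
        exfalso
        rw [hx0, hv0, hv1, T3_eq_chain] at hocc
        obtain ⟨hmem, -⟩ := pair_of_chain _ l (xs' ++ r) v0 v1
          (by simpa [List.append_assoc] using hocc)
        simp only [List.mem_map] at hmem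
        obtain ⟨t, -, ht⟩ := hmem
        have hct := hcolor t
        rw [ht] at hct
        simp only at hct
        rw [hv0c, hv1c] at hct
        exact lt_irrefl _ hct
    choose uu huu1 huu2 using hX1
    -- for each i < j the pair (uu i, uu j) is an edge
    have key : ∀ i j : Fin κ, i < j → ∃ t : Fin m, edges t = (uu i, uu j) := by
      intro i j hij
      have e3 := h3 i j hij
      have e4 := h4 i j hij
      have e5 := h5 i j hij
      have hcan : σ (Blk.E i j) ++ σ (Blk.B i j) = σ (Blk.X i) ++ σ (Blk.J4 i j) :=
        List.append_cancel_left (e3.trans e4.symm)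
      obtain ⟨e0, es, hes⟩ := List.exists_cons_of_ne_nil (hne (Blk.E i j))
      rw [hes, huu1 i] at hcan
      simp only [List.cons_append, List.singleton_append, List.cons.injEq] at hcan
      have he0 : e0 = vtx (uu i) := hcan.1
      have hcan2 : σ (Blk.A i j) ++ σ (Blk.E i j) = σ (Blk.J5 i j) ++ [vtx (uu j)] := by
        have h' := e3.trans e5.symm
        rw [huu1 j] at h'
        have h'' : (σ (Blk.A i j) ++ σ (Blk.E i j)) ++ σ (Blk.B i j) =
            (σ (Blk.J5 i j) ++ [vtx (uu j)]) ++ σ (Blk.B i j) := by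
          simpa [List.append_assoc] using h'
        exact List.append_cancel_right h''
      cases es with
      | nil =>
        exfalso
        rw [hes, he0] at hcan2
        have := (List.append_inj' hcan2 rfl).2
        simp only [List.cons.injEq, vtx, Sum.inl.injEq] at this
        have hijeq : i = j := by rw [← huu2 i, ← huu2 j, this.1]
        exact hij.ne hijeq
      | cons e1 es' =>
        obtain ⟨v1, hv1⟩ := hEv i j hij e1 (by rw [hes]; simp)
        rw [hes, he0, hv1, T3_eq_chain] at e3
        obtain ⟨hmem, hhead⟩ := pair_of_chain _ (σ (Blk.A i j)) (es' ++ σ (Blk.B i j))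
          (uu i) v1 (by simpa [List.append_assoc] using e3)
        cases es' with
        | nil =>
          rw [hes, he0, hv1] at hcan2
          have h' : (σ (Blk.A i j) ++ [vtx (uu i)]) ++ [vtx v1] =
              σ (Blk.J5 i j) ++ [vtx (uu j)] := by
            simpa [List.append_assoc] using hcan2
          have hlast := (List.append_inj' h' rfl).2
          simp only [List.cons.injEq, vtx, Sum.inl.injEq] at hlast
          rw [hlast.1] at hmem
          simp only [List.mem_map] at hmem
          obtain ⟨t, -, ht⟩ := hmem
          refine ⟨t, ?_⟩
          rw [ht]
        | cons e2 es'' =>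
          exfalso
          obtain ⟨v2, hv2⟩ := hEv i j hij e2 (by rw [hes]; simp)
          rw [hv2] at hhead
          simp [vtx, zSep] at hhead
    -- assemble the clique
    have huuinj : Function.Injective uu := by
      intro a b h
      rw [← huu2 a, ← huu2 b, h]
    refine ⟨Finset.image uu Finset.univ, ?_, ?_⟩
    · rw [Finset.card_image_of_injective _ huuinj, Finset.card_univ, Fintype.card_fin]
    · intro a ha b hb hab
      simp only [Finset.mem_image, Finset.mem_univ, true_and] at ha hb
      obtain ⟨i, hi⟩ := ha
      obtain ⟨j, hj⟩ := hb
      subst hi; subst hj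
      have hij : i ≠ j := fun h => hab (by rw [h])
      rcases hij.lt_or_gt with h | h
      · obtain ⟨t, ht⟩ := key i j h
        exact ⟨t, Or.inl ht⟩
      · obtain ⟨t, ht⟩ := key j i h
        exact ⟨t, Or.inr ht⟩
  · -- Backward direction: clique ⇒ solution
    rintro ⟨S, hcard, hclq⟩
    -- colors of clique vertices are pairwise distinct
    have hinjS : Set.InjOn color ↑S := by
      intro a ha b hb hab
      by_contra hne
      obtain ⟨t, ht | ht⟩ := hclq a ha b hb hne <;>
        · have := hcolor t
          rw [ht] at this
          simp only at this
          rw [hab] at this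
          exact lt_irrefl _ this
    have himg : S.image color = Finset.univ :=
      Finset.eq_univ_of_card _ (by rw [Finset.card_image_of_injOn hinjS, hcard]; simp)
    have hu : ∀ k : Fin κ, ∃ v, v ∈ S ∧ color v = k := by
      intro k
      have : k ∈ S.image color := himg ▸ Finset.mem_univ k
      simpa [Finset.mem_image] using this
    set u : Fin κ → Fin n := fun k => (hu k).choose with hudef
    have huS : ∀ k, u k ∈ S := fun k => (hu k).choose_spec.1
    have hucol : ∀ k, color (u k) = k := fun k => (hu k).choose_spec.2
    have huinj : ∀ i j : Fin κ, i ≠ j → u i ≠ u j := by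
      intro i j hij he
      exact hij (by rw [← hucol i, ← hucol j, he])
    have hedge : ∀ i j : Fin κ, i < j → ∃ t : Fin m, edges t = (u i, u j) := by
      intro i j hij
      obtain ⟨t, ht | ht⟩ := hclq (u i) (huS i) (u j) (huS j) (huinj i j hij.ne)
      · exact ⟨t, ht⟩
      · exfalso
        have := hcolor t
        rw [ht] at this
        simp only [hucol] at this
        exact absurd (this.trans hij) (lt_irrefl j)
    -- a total choice of witnessing edge indices
    have hedge01 : ∃ t : Fin m, edges t = (u ⟨0, by omega⟩, u ⟨1, by omega⟩) :=
      hedge _ _ (by simp [Fin.lt_def])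
    set tf : Fin κ → Fin κ → Fin m := fun i j =>
      if h : i < j then (hedge i j h).choose else hedge01.choose with htfdef
    have htf : ∀ i j : Fin κ, i < j → edges (tf i j) = (u i, u j) := by
      intro i j h
      simp only [htfdef, dif_pos h]
      exact (hedge i j h).choose_spec
    -- decomposition of each color class around u k
    have hw : ∀ k : Fin κ, ∃ p s : List (Fin n),
        ((List.finRange n).filter fun v => decide (color v = k)) = p ++ u k :: s := by
      intro k
      have : u k ∈ (List.finRange n).filter fun v => decide (color v = k) := by
        simp [List.mem_filter, hucol]
      exact List.append_of_mem this
    set pf : Fin κ → List (Fin n) := fun k => (hw k).choose with hpfdef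
    set sf : Fin κ → List (Fin n) := fun k => (hw k).choose_spec.choose with hsfdef
    have hps : ∀ k, ((List.finRange n).filter fun v => decide (color v = k)) =
        pf k ++ u k :: sf k := fun k => (hw k).choose_spec.choose_spec
    refine ⟨mkσ edges u tf pf sf, ?_, ?_, ?_, ?_, ?_, ?_⟩
    · rintro (_ | _ | _ | _ | ⟨_ | _, _⟩ | ⟨_ | _, _, _⟩ | _ | _) <;>
        simp [mkσ, pre, post]
    · intro i
      simp only [List.flatMap_cons, List.flatMap_nil, List.append_nil, mkσ, T1, hps i]
      simp
    · intro i j hij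
      simp only [List.flatMap_cons, List.flatMap_nil, List.append_nil, mkσ]
      rw [T2_split edges (tf i j), htf i j hij]
      simp
    · intro i j hij
      simp only [List.flatMap_cons, List.flatMap_nil, List.append_nil, mkσ]
      rw [T3_split edges (tf i j), htf i j hij]
      simp
    · intro i j hij
      simp only [List.flatMap_cons, List.flatMap_nil, List.append_nil, mkσ]
      rw [T3_split edges (tf i j), htf i j hij]
      simp
    · intro i j hij
      simp only [List.flatMap_cons, List.flatMap_nil, List.append_nil, mkσ]
      rw [T3_split edges (tf i j), htf i j hij]
      simp

end Stmt8
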